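/- Let k be a field, L a field extension of k, and G a finite abelian group acting on L by k-algebra automorphisms. Let g ∈ G have order n ≥ 2 and let χ : G → kˣ be a character such that χ(g) is a primitive n-th root of unity in k. Let w ∈ L satisfy h(w) = χ(h)·w for all h ∈ G, and define x : L → L by x(a) = w·(a − g(a)). Then: (i) x is k-linear and x(a·b) = g(a)·x(b) + x(a)·b for all a, b ∈ L; (ii) h(x(a)) = χ(h)·x(h(a)) for all h ∈ G and a ∈ L; and (iii) the n-fold composite x ∘ ⋯ ∘ x (n times) is the zero map. -/

import Mathlib

open Polynomial Finset


/-- Converse direction of Theorem 3.3: for `w` a `χ`-eigenvector, the operator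
`x(a) = w * (a - g a)` is a k-linear (g,1)-skew derivation, commutes with `G`
via `χ`, and is nilpotent of order `n`. -/
theorem stmt_1 (k L : Type*) [Field k] [Field L] [Algebra k L]
    (G : Type*) [CommGroup G] [Fintype G]
    (ρ : G →* (L ≃ₐ[k] L))
    (g : G) (n : ℕ) (hn : 2 ≤ n) (hg : orderOf g = n)
    (χ : G →* kˣ) (hχ : IsPrimitiveRoot ((χ g : kˣ) : k) n)
    (w : L) (hw : ∀ h : G, ρ h w = (χ h : k) • w)
    (x : L → L) (hx : ∀ a : L, x a = w * (a - ρ g a)) :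
    (∀ (c : k) (a : L), x (c • a) = c • x a) ∧
    (∀ a b : L, x (a + b) = x a + x b) ∧
    (∀ a b : L, x (a * b) = ρ g a * x b + x a * b) ∧
    (∀ (h : G) (a : L), ρ h (x a) = (χ h : k) • x (ρ h a)) ∧
    (∀ a : L, x^[n] a = 0) := by
  set ζ : k := ((χ g : kˣ) : k) with hζdef
  refine ⟨?_, ?_, ?_, ?_, ?_⟩
  · intro c a
    simp only [hx, map_smul, smul_sub, smul_mul_assoc, mul_smul_comm]
    rw [← smul_sub, mul_smul_comm]
  · intro a b
    simp only [hx, map_add]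
    ring
  · intro a b
    simp only [hx, map_mul]
    ring
  · intro h a
    have hcomm : ρ h (ρ g a) = ρ g (ρ h a) := by
      have : ρ (h * g) a = ρ (g * h) a := by rw [mul_comm]
      simpa [map_mul] using this
    simp only [hx, map_mul, map_sub, hw h, hcomm, smul_mul_assoc, smul_sub, mul_smul_comm]
  · -- nilpotency
    intro a
    set σ : Module.End k L := (ρ g).toLinearMap with hσdef
    have hσa : ∀ (b : L), σ b = ρ g b := fun b => rfl
    have hσpow : ∀ (m : ℕ) (b : L), (σ ^ m) b = ρ (g ^ m) b := by
      intro m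
      induction m with
      | zero => intro b; simp
      | succ m ih =>
        intro b
        have e1 : (σ ^ (m + 1)) b = (σ ^ m) (σ b) := by rw [pow_succ]; rfl
        have e2 : ρ (g ^ (m + 1)) b = ρ (g ^ m) (ρ g b) := by rw [pow_succ, map_mul]; rfl
        rw [e1, e2, ih (σ b), hσa]
    have hζ0 : ζ ≠ 0 := (χ g).ne_zero
    -- polynomial identity
    have hpoly : ∏ i ∈ range n, (1 - C (ζ ^ i) * X) = 1 - X ^ n := by
      have h1 : (X ^ n - C (1:k)) = ∏ i ∈ range n, (X - C (ζ⁻¹ ^ i * 1)) :=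
        X_pow_sub_C_eq_prod hχ.inv (by omega) (one_pow n)
      have h2 : ∀ i ∈ range n, (1 - C (ζ ^ i) * X : k[X]) =
          (-C (ζ ^ i)) * (X - C (ζ⁻¹ ^ i * 1)) := by
        intro i _
        have hz : (ζ ^ i) * (ζ⁻¹ ^ i) = 1 := by rw [← mul_pow, mul_inv_cancel₀ hζ0, one_pow]
        have h3 : (C (ζ ^ i) : k[X]) * C (ζ⁻¹ ^ i * 1) = 1 := by
          rw [mul_one, ← map_mul, hz, map_one]
        linear_combination -h3
      have key : ∏ i ∈ range n, (1 - C (ζ ^ i) * X) =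
          C (∏ i ∈ range n, (-(ζ ^ i))) * (X ^ n - C 1) := by
        rw [Finset.prod_congr rfl h2, Finset.prod_mul_distrib, ← h1, map_prod]
        simp
      have hev := congrArg (Polynomial.eval (0:k)) key
      simp only [eval_prod, eval_sub, eval_one, eval_mul, eval_C, eval_X, mul_zero, sub_zero,
        eval_pow, Finset.prod_const_one] at hev
      rw [zero_pow (by omega : n ≠ 0)] at hev
      have hu : (∏ i ∈ range n, (-(ζ ^ i))) = -1 := by linear_combination hev
      rw [key, hu]
      simp only [map_neg, map_one]
      ring
    -- iterate formula
    have hkey : ∀ (m : ℕ) (b : L),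
        x^[m] b = w ^ m * (Polynomial.aeval σ (∏ i ∈ range m, (1 - C (ζ ^ i) * X))) b := by
      intro m
      induction m with
      | zero => intro b; simp
      | succ m ih =>
        intro b
        rw [Function.iterate_succ_apply', ih b, hx, Finset.prod_range_succ,
          map_mul (Polynomial.aeval σ)]
        set P : Module.End k L := Polynomial.aeval σ (∏ i ∈ range m, (1 - C (ζ ^ i) * X)) with hP
        have hq : (Polynomial.aeval σ) (1 - C (ζ ^ m) * X) = 1 - ζ ^ m • σ := by
          rw [map_sub, map_one, map_mul, aeval_C, aeval_X, Algebra.algebraMap_eq_smul_one,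
            smul_mul_assoc, one_mul]
        have hρw : ρ g (w ^ m) = ζ ^ m • w ^ m := by
          rw [map_pow, hw g, _root_.smul_pow]
        have hc : σ * P = P * σ := by
          have hcm := (Commute.all (X : k[X]) (∏ i ∈ range m, (1 - C (ζ ^ i) * X))).map
            (Polynomial.aeval σ)
          simpa [Commute, SemiconjBy, hP, aeval_X] using hcm
        have hσP : ρ g (P b) = P (ρ g b) := by
          calc ρ g (P b) = (σ * P) b := rfl
            _ = (P * σ) b := by rw [hc]
            _ = P (ρ g b) := by rw [Module.End.mul_apply, hσa]
        have happ : (P * (1 - ζ ^ m • σ)) b = P b - ζ ^ m • P (ρ g b) := by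
          rw [Module.End.mul_apply, LinearMap.sub_apply, Module.End.one_apply,
            LinearMap.smul_apply, map_sub, map_smul, hσa]
        rw [hq, happ, map_mul, hρw, hσP]
        simp only [Algebra.smul_def]
        ring
    have hgn : g ^ n = 1 := by rw [← hg]; exact pow_orderOf_eq_one g
    rw [hkey n a, hpoly, map_sub, map_one, map_pow, aeval_X]
    rw [LinearMap.sub_apply, Module.End.one_apply, hσpow n a, hgn]
    simp
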